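/- For any graph G and any vertex v of G, γ_g'(G) − γ_g'(G−v) ≤ 2, where γ_g' is the Staller-start game domination number. -/
import Mathlib


open Classical

noncomputable section

namespace DomGame

variable {V : Type*} [Fintype V]

/-- Closed neighborhood of `v` as a `Finset`. -/
noncomputable def N (G : SimpleGraph V) (v : V) : Finset V :=
  Finset.univ.filter (fun u => G.Adj v u ∨ u = v)

/-- Legal moves given the set `S` of already dominated vertices. -/
noncomputable def moves (G : SimpleGraph V) (S : Finset V) : Finset V :=
  Finset.univ.filter (fun v => ¬ N G v ⊆ S)

lemma card_lt {G : SimpleGraph V} {S : Finset V} (v : V) (hv : v ∈ moves G S) :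
    (Finset.univ \ (S ∪ N G v)).card < (Finset.univ \ S).card := by
  simp only [moves, Finset.mem_filter] at hv
  obtain ⟨u, hu, hus⟩ := Finset.not_subset.mp hv.2
  apply Finset.card_lt_card
  refine ⟨Finset.sdiff_subset_sdiff (le_refl _) Finset.subset_union_left, ?_⟩
  intro hsub
  have := hsub (Finset.mem_sdiff.mpr ⟨Finset.mem_univ u, hus⟩)
  rw [Finset.mem_sdiff, Finset.mem_union] at this
  exact this.2 (Or.inr hu)

mutual
/-- Number of moves with optimal play when it is Dominator's turn and
`S` is the set of already dominated vertices. -/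
noncomputable def gameD (G : SimpleGraph V) (S : Finset V) : ℕ :=
  if h : (moves G S).Nonempty then
    1 + (moves G S).attach.inf' (by simpa using h)
      (fun v => gameS G (S ∪ N G v.1))
  else 0
termination_by (Finset.univ \ S).card
decreasing_by exact card_lt v.1 v.2

/-- Number of moves with optimal play when it is Staller's turn. -/
noncomputable def gameS (G : SimpleGraph V) (S : Finset V) : ℕ :=
  if h : (moves G S).Nonempty then
    1 + (moves G S).attach.sup' (by simpa using h)
      (fun v => gameD G (S ∪ N G v.1))
  else 0
termination_by (Finset.univ \ S).card
decreasing_by exact card_lt v.1 v.2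
end

/-- The (Dominator-start) game domination number. -/
noncomputable def gammaG (G : SimpleGraph V) : ℕ := gameD G ∅

/-- The Staller-start game domination number. -/
noncomputable def gammaG' (G : SimpleGraph V) : ℕ := gameS G ∅

lemma gameD_eq (G : SimpleGraph V) (S : Finset V) :
    gameD G S = if h : (moves G S).Nonempty then
    1 + (moves G S).attach.inf' (by simpa using h)
      (fun v => gameS G (S ∪ N G v.1)) else 0 := by
  rw [gameD]

lemma gameS_eq (G : SimpleGraph V) (S : Finset V) :
    gameS G S = if h : (moves G S).Nonempty then
    1 + (moves G S).attach.sup' (by simpa using h)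
      (fun v => gameD G (S ∪ N G v.1)) else 0 := by
  rw [gameS]

lemma gameD_of_empty {G : SimpleGraph V} {S : Finset V} (h : ¬ (moves G S).Nonempty) :
    gameD G S = 0 := by rw [gameD_eq, dif_neg h]
lemma gameS_of_empty {G : SimpleGraph V} {S : Finset V} (h : ¬ (moves G S).Nonempty) :
    gameS G S = 0 := by rw [gameS_eq, dif_neg h]

lemma gameD_le_of_mem {G : SimpleGraph V} {S : Finset V} {a : V} (ha : a ∈ moves G S) :
    gameD G S ≤ 1 + gameS G (S ∪ N G a) := by
  rw [gameD_eq, dif_pos ⟨a, ha⟩]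
  exact Nat.add_le_add_left (Finset.inf'_le (f := fun v : {x // x ∈ moves G S} => gameS G (S ∪ N G v.1)) (Finset.mem_attach _ ⟨a, ha⟩)) 1

lemma le_gameS_of_mem {G : SimpleGraph V} {S : Finset V} {a : V} (ha : a ∈ moves G S) :
    1 + gameD G (S ∪ N G a) ≤ gameS G S := by
  rw [gameS_eq, dif_pos ⟨a, ha⟩]
  exact Nat.add_le_add_left (Finset.le_sup' (f := fun v : {x // x ∈ moves G S} => gameD G (S ∪ N G v.1)) (Finset.mem_attach _ ⟨a, ha⟩)) 1

lemma gameD_exists {G : SimpleGraph V} {S : Finset V} (h : (moves G S).Nonempty) :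
    ∃ a ∈ moves G S, gameD G S = 1 + gameS G (S ∪ N G a) := by
  obtain ⟨⟨a, ha⟩, -, hval⟩ := Finset.exists_mem_eq_inf' (Finset.attach_nonempty_iff.mpr h)
    (fun v : {x // x ∈ moves G S} => gameS G (S ∪ N G v.1))
  exact ⟨a, ha, by rw [gameD_eq, dif_pos h, hval]⟩

lemma gameS_exists {G : SimpleGraph V} {S : Finset V} (h : (moves G S).Nonempty) :
    ∃ a ∈ moves G S, gameS G S = 1 + gameD G (S ∪ N G a) := by
  obtain ⟨⟨a, ha⟩, -, hval⟩ := Finset.exists_mem_eq_sup' (Finset.attach_nonempty_iff.mpr h)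
    (fun v : {x // x ∈ moves G S} => gameD G (S ∪ N G v.1))
  exact ⟨a, ha, by rw [gameS_eq, dif_pos h, hval]⟩

lemma self_mem_N (G : SimpleGraph V) (v : V) : v ∈ N G v := by simp [N]
lemma mem_moves {G : SimpleGraph V} {S : Finset V} {a : V} :
    a ∈ moves G S ↔ ¬ N G a ⊆ S := by simp [moves]
lemma moves_nonempty_iff {G : SimpleGraph V} {S : Finset V} :
    (moves G S).Nonempty ↔ S ≠ Finset.univ := by
  constructor
  · rintro ⟨a, ha⟩ rfl
    exact (mem_moves.mp ha) (Finset.subset_univ _)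
  · intro h
    have : ∃ w, w ∉ S := by
      by_contra hc
      push_neg at hc
      exact h (Finset.eq_univ_iff_forall.mpr hc)
    obtain ⟨w, hw⟩ := this
    exact ⟨w, mem_moves.mpr fun hsub => hw (hsub (self_mem_N G w))⟩


lemma one_system (G : SimpleGraph V) : ∀ k : ℕ, ∀ A : Finset V,
    (Finset.univ \ A).card ≤ k →
    (∀ B, A ⊆ B → gameD G B ≤ gameD G A ∧ gameS G B ≤ gameS G A) ∧
      gameD G A ≤ gameS G A + 1 ∧ gameS G A ≤ gameD G A + 1 := by
  intro k
  induction k with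
  | zero =>
    intro A hA
    have hAuniv : A = Finset.univ := by
      have h0 : (Finset.univ \ A) = ∅ := Finset.card_eq_zero.mp (Nat.le_zero.mp hA)
      have : Finset.univ ⊆ A := by
        intro x hx
        by_contra hxA
        exact (Finset.notMem_empty x) (h0 ▸ Finset.mem_sdiff.mpr ⟨hx, hxA⟩)
      exact Finset.eq_univ_iff_forall.mpr fun x => this (Finset.mem_univ x)
    subst hAuniv
    have hne : ¬ (moves G Finset.univ).Nonempty := by
      rw [moves_nonempty_iff]; simp
    have hD := gameD_of_empty (G := G) hne
    have hS := gameS_of_empty (G := G) hne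
    refine ⟨?_, by omega, by omega⟩
    intro B hB
    have : B = Finset.univ := Finset.eq_univ_iff_forall.mpr fun x => hB (Finset.mem_univ x)
    subst this
    omega
  | succ k ih =>
    intro A hA
    have Hmono : ∀ B, A ⊆ B → gameD G B ≤ gameD G A ∧ gameS G B ≤ gameS G A := by
      intro B hAB
      constructor
      · -- gameD G B ≤ gameD G A
        by_cases hB : (moves G B).Nonempty
        · have hA' : (moves G A).Nonempty := by
            rw [moves_nonempty_iff] at hB ⊢
            intro h; subst h
            exact hB (Finset.eq_univ_iff_forall.mpr fun x => hAB (Finset.mem_univ x))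
          obtain ⟨d, hd, hdef⟩ := gameD_exists hA'
          have md : (Finset.univ \ (A ∪ N G d)).card ≤ k := by
            have := card_lt d hd; omega
          by_cases hcase : N G d ⊆ B
          · have h1 := ((ih (A ∪ N G d) md).1 B
              (Finset.union_subset hAB hcase)).1
            have h2 := (ih (A ∪ N G d) md).2.1
            omega
          · have hdB : d ∈ moves G B := mem_moves.mpr hcase
            have h1 := gameD_le_of_mem hdB
            have h2 := ((ih (A ∪ N G d) md).1 (B ∪ N G d)
              (Finset.union_subset_union hAB (le_refl _))).2
            omega
        · rw [gameD_of_empty hB]; omega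
      · -- gameS G B ≤ gameS G A
        by_cases hB : (moves G B).Nonempty
        · obtain ⟨m, hm, hdefS⟩ := gameS_exists hB
          have hmA : m ∈ moves G A := mem_moves.mpr
            (fun hsub => (mem_moves.mp hm) (hsub.trans hAB))
          have h1 := le_gameS_of_mem hmA
          have md : (Finset.univ \ (A ∪ N G m)).card ≤ k := by
            have := card_lt m hmA; omega
          have h2 := ((ih (A ∪ N G m) md).1 (B ∪ N G m)
            (Finset.union_subset_union hAB (le_refl _))).1
          omega
        · rw [gameS_of_empty hB]; omega
    refine ⟨Hmono, ?_, ?_⟩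
    · -- DS
      by_cases hA' : (moves G A).Nonempty
      · obtain ⟨m0, hm0⟩ := hA'
        have h1 := gameD_le_of_mem hm0
        have h2 := le_gameS_of_mem hm0
        have md : (Finset.univ \ (A ∪ N G m0)).card ≤ k := by
          have := card_lt m0 hm0; omega
        have h3 := (ih (A ∪ N G m0) md).2.2
        omega
      · rw [gameD_of_empty hA']; omega
    · -- SD
      by_cases hA' : (moves G A).Nonempty
      · obtain ⟨m, hm, hdefS⟩ := gameS_exists hA'
        have h2 := (Hmono (A ∪ N G m) Finset.subset_union_left).1
        omega
      · rw [gameS_of_empty hA']; omega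

lemma gameD_mono {G : SimpleGraph V} {A B : Finset V} (h : A ⊆ B) :
    gameD G B ≤ gameD G A :=
  ((one_system G _ A le_rfl).1 B h).1

lemma gameS_mono {G : SimpleGraph V} {A B : Finset V} (h : A ⊆ B) :
    gameS G B ≤ gameS G A :=
  ((one_system G _ A le_rfl).1 B h).2

lemma gameD_le_gameS_succ (G : SimpleGraph V) (A : Finset V) :
    gameD G A ≤ gameS G A + 1 :=
  (one_system G _ A le_rfl).2.1


attribute [-instance] Subtype.instDecidableEq

section Cross

variable {G : SimpleGraph V} {v : V}

/-- Push a finset of the vertex-deleted graph into `V`. -/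
def rho (v : V) (T : Finset ↥({v}ᶜ : Set V)) : Finset V := T.image Subtype.val

lemma ne_v (w : ↥({v}ᶜ : Set V)) : (w : V) ≠ v := Set.mem_compl_singleton_iff.mp w.2

lemma not_v_mem_rho (T : Finset ↥({v}ᶜ : Set V)) : v ∉ rho v T := by
  intro h
  obtain ⟨w, -, hw⟩ := Finset.mem_image.mp h
  exact ne_v w hw

lemma mem_rho_iff {T : Finset ↥({v}ᶜ : Set V)} {w : ↥({v}ᶜ : Set V)} :
    (w : V) ∈ rho v T ↔ w ∈ T := by
  constructor
  · intro h
    obtain ⟨w', hw', h2⟩ := Finset.mem_image.mp h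
    rwa [Subtype.val_injective h2] at hw'
  · intro h; exact Finset.mem_image.mpr ⟨w, h, rfl⟩

lemma rho_mono {T U : Finset ↥({v}ᶜ : Set V)} (h : T ⊆ U) : rho v T ⊆ rho v U :=
  Finset.image_subset_image h

lemma mem_N_G {u w : V} : u ∈ N G w ↔ (G.Adj w u ∨ u = w) := by
  simp [N]

lemma mem_N_iff {u m : ↥({v}ᶜ : Set V)} :
    u ∈ N (G.induce {v}ᶜ) m ↔ (u : V) ∈ N G (m : V) := by
  rw [mem_N_G, mem_N_G]
  constructor
  · rintro (h | h)
    · exact Or.inl (by simpa using h)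
    · exact Or.inr (by rw [h])
  · rintro (h | h)
    · exact Or.inl (by simpa using h)
    · exact Or.inr (Subtype.ext h)

lemma mem_rho_union_N {T : Finset ↥({v}ᶜ : Set V)} {m : ↥({v}ᶜ : Set V)} {u : V}
    (hu : u ≠ v) :
    u ∈ rho v (T ∪ N (G.induce {v}ᶜ) m) ↔ (u ∈ rho v T ∨ u ∈ N G (m : V)) := by
  have hmem : u ∈ ({v}ᶜ : Set V) := Set.mem_compl_singleton_iff.mpr hu
  rw [show u = ((⟨u, hmem⟩ : ↥({v}ᶜ : Set V)) : V) from rfl, mem_rho_iff,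
    Finset.mem_union, mem_rho_iff, mem_N_iff]

/-- the lifted open neighborhood of `v` -/
def Xhat (G : SimpleGraph V) (v : V) : Finset ↥({v}ᶜ : Set V) :=
  Finset.univ.filter (fun w => G.Adj v (w : V))

lemma mem_rho_union_Xhat {T : Finset ↥({v}ᶜ : Set V)} {u : V} (hu : u ≠ v) :
    u ∈ rho v (T ∪ Xhat G v) ↔ (u ∈ rho v T ∨ G.Adj v u) := by
  have hmem : u ∈ ({v}ᶜ : Set V) := Set.mem_compl_singleton_iff.mpr hu
  rw [show u = ((⟨u, hmem⟩ : ↥({v}ᶜ : Set V)) : V) from rfl, mem_rho_iff,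
    Finset.mem_union, mem_rho_iff]
  simp [Xhat]

/-- Key set identity, regime-2 form. -/
lemma set_id_C (T : Finset ↥({v}ᶜ : Set V)) (m : ↥({v}ᶜ : Set V)) :
    (rho v T ∪ {v}) ∪ N G (m : V) = rho v (T ∪ N (G.induce {v}ᶜ) m) ∪ {v} := by
  ext u
  by_cases hu : u = v
  · subst hu; simp
  · simp only [Finset.mem_union, Finset.mem_singleton, mem_rho_union_N hu, hu, or_false]

lemma set_id_A (T : Finset ↥({v}ᶜ : Set V)) (m : ↥({v}ᶜ : Set V))
    (hv : v ∈ N G (m : V)) :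
    rho v T ∪ N G (m : V) = rho v (T ∪ N (G.induce {v}ᶜ) m) ∪ {v} := by
  ext u
  by_cases hu : u = v
  · subst hu; simp [hv]
  · simp only [Finset.mem_union, Finset.mem_singleton, mem_rho_union_N hu, hu, or_false]

lemma set_id_B (T : Finset ↥({v}ᶜ : Set V)) (m : ↥({v}ᶜ : Set V))
    (hv : v ∉ N G (m : V)) :
    rho v T ∪ N G (m : V) = rho v (T ∪ N (G.induce {v}ᶜ) m) := by
  ext u
  by_cases hu : u = v
  · subst hu
    simp only [Finset.mem_union]
    constructor
    · rintro (h | h)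
      · exact absurd h (not_v_mem_rho T)
      · exact absurd h hv
    · intro h; exact absurd h (not_v_mem_rho _)
  · simp only [Finset.mem_union, mem_rho_union_N hu]

lemma set_id_v (T : Finset ↥({v}ᶜ : Set V)) :
    rho v T ∪ N G v = rho v (T ∪ Xhat G v) ∪ {v} := by
  ext u
  by_cases hu : u = v
  · subst hu; simp [self_mem_N]
  · simp only [Finset.mem_union, Finset.mem_singleton, mem_rho_union_Xhat hu, hu, or_false,
      mem_N_G]

lemma set_id_v2 (T : Finset ↥({v}ᶜ : Set V)) :
    (rho v T ∪ {v}) ∪ N G v = rho v (T ∪ Xhat G v) ∪ {v} := by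
  rw [Finset.union_right_comm, set_id_v, Finset.union_assoc, Finset.union_self]

/-- legality transfer: imagined legal → real legal. -/
lemma imag_legal_real {T : Finset ↥({v}ᶜ : Set V)} {m : ↥({v}ᶜ : Set V)}
    (hm : m ∈ moves (G.induce {v}ᶜ) T) {S : Finset V} (hS : S ⊆ rho v T ∪ {v}) :
    (m : V) ∈ moves G S := by
  obtain ⟨u, hu, huT⟩ := Finset.not_subset.mp (mem_moves.mp hm)
  refine mem_moves.mpr (Finset.not_subset.mpr ⟨(u : V), mem_N_iff.mp hu, fun hc => ?_⟩)
  rcases Finset.mem_union.mp (hS hc) with h | h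
  · exact huT (mem_rho_iff.mp h)
  · exact ne_v u (Finset.mem_singleton.mp h)

/-- real regime-2 nonempty → imagined nonempty -/
lemma real_ne_imp_imag_ne {T : Finset ↥({v}ᶜ : Set V)}
    (h : (moves G (rho v T ∪ {v})).Nonempty) : (moves (G.induce {v}ᶜ) T).Nonempty := by
  obtain ⟨m, hm⟩ := h
  obtain ⟨u, hu, huS⟩ := Finset.not_subset.mp (mem_moves.mp hm)
  have huv : u ≠ v := fun hc => huS (by simp [hc])
  have huT : u ∉ rho v T := fun hc => huS (Finset.mem_union_left _ hc)
  refine ⟨⟨u, Set.mem_compl_singleton_iff.mpr huv⟩, mem_moves.mpr (Finset.not_subset.mpr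
    ⟨⟨u, Set.mem_compl_singleton_iff.mpr huv⟩, self_mem_N _ _, fun hc => ?_⟩)⟩
  exact huT (mem_rho_iff.mpr hc)

end Cross


section Main

variable {G : SimpleGraph V} {v : V}

lemma not_nonempty_moves_of_card {S : Finset V} (h : (Finset.univ \ S).card ≤ 0) :
    ¬ (moves G S).Nonempty := by
  rw [moves_nonempty_iff]
  intro hne
  apply hne
  have h0 : (Finset.univ \ S) = ∅ := Finset.card_eq_zero.mp (Nat.le_zero.mp h)
  apply Finset.eq_univ_iff_forall.mpr
  intro x
  by_contra hxA
  exact (Finset.notMem_empty x) (h0 ▸ Finset.mem_sdiff.mpr ⟨Finset.mem_univ x, hxA⟩)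

/-- Regime 3: once `v` and all its neighbours are dominated, the real game is
at most the imagined game (same player to move). -/
lemma R3 : ∀ (k : ℕ) (T : Finset ↥({v}ᶜ : Set V)),
    (Finset.univ \ (rho v T ∪ {v})).card ≤ k →
    (∀ u, G.Adj v u → u ∈ rho v T) →
    gameD G (rho v T ∪ {v}) ≤ gameD (G.induce {v}ᶜ) T ∧
      gameS G (rho v T ∪ {v}) ≤ gameS (G.induce {v}ᶜ) T := by
  intro k
  induction k with
  | zero =>
    intro T hk _
    rw [gameD_of_empty (not_nonempty_moves_of_card hk),
      gameS_of_empty (not_nonempty_moves_of_card hk)]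
    exact ⟨Nat.zero_le _, Nat.zero_le _⟩
  | succ k ih =>
    intro T hk hX
    constructor
    · -- Dominator's turn
      by_cases hre : (moves G (rho v T ∪ {v})).Nonempty
      · have himag := real_ne_imp_imag_ne hre
        obtain ⟨d, hd, hdef⟩ := gameD_exists himag
        have hdreal : (d : V) ∈ moves G (rho v T ∪ {v}) :=
          imag_legal_real hd (le_refl _)
        have h1 := gameD_le_of_mem hdreal
        rw [set_id_C T d] at h1
        have hmeas : (Finset.univ \ (rho v (T ∪ N (G.induce {v}ᶜ) d) ∪ {v})).card ≤ k := by
          have := card_lt _ hdreal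
          rw [set_id_C T d] at this
          omega
        have hX' : ∀ u, G.Adj v u → u ∈ rho v (T ∪ N (G.induce {v}ᶜ) d) :=
          fun u hu => rho_mono Finset.subset_union_left (hX u hu)
        have h2 := (ih (T ∪ N (G.induce {v}ᶜ) d) hmeas hX').2
        omega
      · rw [gameD_of_empty hre]; exact Nat.zero_le _
    · -- Staller's turn
      by_cases hre : (moves G (rho v T ∪ {v})).Nonempty
      · obtain ⟨m, hm, hdef⟩ := gameS_exists hre
        -- m ≠ v since N G v ⊆ ρT ∪ {v}
        have hNv : N G v ⊆ rho v T ∪ {v} := by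
          intro u hu
          rcases mem_N_G.mp hu with h | h
          · exact Finset.mem_union_left _ (hX u h)
          · exact Finset.mem_union_right _ (by simp [h])
        have hmv : m ≠ v := by
          intro h; subst h
          exact (mem_moves.mp hm) hNv
        have hmc : m ∈ ({v}ᶜ : Set V) := Set.mem_compl_singleton_iff.mpr hmv
        set mh : ↥({v}ᶜ : Set V) := ⟨m, hmc⟩ with hmh
        have hco : (mh : V) = m := rfl
        -- imagined legality
        obtain ⟨u, hu, huS⟩ := Finset.not_subset.mp (mem_moves.mp hm)
        have huv : u ≠ v := fun hc => huS (by simp [hc])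
        have huc : u ∈ ({v}ᶜ : Set V) := Set.mem_compl_singleton_iff.mpr huv
        have hmhleg : mh ∈ moves (G.induce {v}ᶜ) T := by
          refine mem_moves.mpr (Finset.not_subset.mpr ⟨⟨u, huc⟩, ?_, ?_⟩)
          · exact mem_N_iff.mpr (by rw [hco]; exact hu)
          · intro hc
            exact huS (Finset.mem_union_left _ (mem_rho_iff.mpr hc))
        have h1 : gameS G (rho v T ∪ {v}) =
            1 + gameD G (rho v (T ∪ N (G.induce {v}ᶜ) mh) ∪ {v}) := by
          rw [hdef, ← set_id_C T mh, hco]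
        have hmeas : (Finset.univ \ (rho v (T ∪ N (G.induce {v}ᶜ) mh) ∪ {v})).card ≤ k := by
          have := card_lt _ hm
          rw [show (rho v T ∪ {v}) ∪ N G m = rho v (T ∪ N (G.induce {v}ᶜ) mh) ∪ {v} by
            rw [← set_id_C T mh, hco]] at this
          omega
        have hX' : ∀ u', G.Adj v u' → u' ∈ rho v (T ∪ N (G.induce {v}ᶜ) mh) :=
          fun u' hu' => rho_mono Finset.subset_union_left (hX u' hu')
        have h2 := (ih (T ∪ N (G.induce {v}ᶜ) mh) hmeas hX').1
        have h3 := le_gameS_of_mem hmhleg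
        omega
      · rw [gameS_of_empty hre]; exact Nat.zero_le _

/-- Mismatch lemma: Dominator to move in the real game, Staller to move in the
imagined game; Dominator plays `v`. -/
lemma M1 (T : Finset ↥({v}ᶜ : Set V)) :
    gameD G (rho v T ∪ {v}) ≤ gameS (G.induce {v}ᶜ) T + 1 := by
  by_cases hX : ∀ u, G.Adj v u → u ∈ rho v T
  · have h1 := (R3 (Finset.univ \ (rho v T ∪ {v})).card T le_rfl hX).1
    have h2 := gameD_le_gameS_succ (G.induce {v}ᶜ) T
    omega
  · push_neg at hX
    obtain ⟨u, hadj, hu⟩ := hX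
    have huv : u ≠ v := hadj.ne'
    have hvleg : v ∈ moves G (rho v T ∪ {v}) := by
      refine mem_moves.mpr (Finset.not_subset.mpr ⟨u, mem_N_G.mpr (Or.inl hadj), ?_⟩)
      intro hc
      rcases Finset.mem_union.mp hc with h | h
      · exact hu h
      · exact huv (Finset.mem_singleton.mp h)
    have h1 := gameD_le_of_mem hvleg
    rw [set_id_v2 T] at h1
    have hX' : ∀ u', G.Adj v u' → u' ∈ rho v (T ∪ Xhat G v) := by
      intro u' hu'
      exact (mem_rho_union_Xhat hu'.ne').mpr (Or.inr hu')
    have h2 := (R3 (Finset.univ \ (rho v (T ∪ Xhat G v) ∪ {v})).card _ le_rfl hX').2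
    have h3 : gameS (G.induce {v}ᶜ) (T ∪ Xhat G v) ≤ gameS (G.induce {v}ᶜ) T :=
      gameS_mono Finset.subset_union_left
    omega

/-- The main mutual induction. -/
lemma mainlem : ∀ (k : ℕ) (T : Finset ↥({v}ᶜ : Set V)),
    ((Finset.univ \ (rho v T ∪ {v})).card ≤ k →
      gameD G (rho v T ∪ {v}) ≤ gameD (G.induce {v}ᶜ) T + 2 ∧
      gameS G (rho v T ∪ {v}) ≤ gameS (G.induce {v}ᶜ) T + 2) ∧
    ((Finset.univ \ rho v T).card ≤ k →
      gameD G (rho v T) ≤ gameD (G.induce {v}ᶜ) T + 2 ∧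
      gameS G (rho v T) ≤ gameS (G.induce {v}ᶜ) T + 2) := by
  intro k
  induction k with
  | zero =>
    intro T
    constructor
    · intro hk
      rw [gameD_of_empty (not_nonempty_moves_of_card hk),
        gameS_of_empty (not_nonempty_moves_of_card hk)]
      exact ⟨Nat.zero_le _, Nat.zero_le _⟩
    · intro hk
      rw [gameD_of_empty (not_nonempty_moves_of_card hk),
        gameS_of_empty (not_nonempty_moves_of_card hk)]
      exact ⟨Nat.zero_le _, Nat.zero_le _⟩
  | succ k ih =>
    intro T
    constructor
    · intro hk
      constructor
      · -- (2D2)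
        by_cases hre : (moves G (rho v T ∪ {v})).Nonempty
        · have himag := real_ne_imp_imag_ne hre
          obtain ⟨d, hd, hdef⟩ := gameD_exists himag
          have hdreal : (d : V) ∈ moves G (rho v T ∪ {v}) :=
            imag_legal_real hd (le_refl _)
          have h1 := gameD_le_of_mem hdreal
          rw [set_id_C T d] at h1
          have hmeas : (Finset.univ \ (rho v (T ∪ N (G.induce {v}ᶜ) d) ∪ {v})).card ≤ k := by
            have := card_lt _ hdreal
            rw [set_id_C T d] at this
            omega
          have h2 := ((ih (T ∪ N (G.induce {v}ᶜ) d)).1 hmeas).2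
          omega
        · rw [gameD_of_empty hre]; omega
      · -- (2S2)
        by_cases hre : (moves G (rho v T ∪ {v})).Nonempty
        · obtain ⟨m, hm, hdef⟩ := gameS_exists hre
          by_cases hmv : m = v
          · subst hmv
            rw [set_id_v2 T] at hdef
            have hX' : ∀ u', G.Adj m u' → u' ∈ rho m (T ∪ Xhat G m) := by
              intro u' hu'
              exact (mem_rho_union_Xhat hu'.ne').mpr (Or.inr hu')
            have h2 := (R3 (Finset.univ \ (rho m (T ∪ Xhat G m) ∪ {m})).card _ le_rfl hX').1
            have h3 : gameD (G.induce {m}ᶜ) (T ∪ Xhat G m) ≤ gameD (G.induce {m}ᶜ) T :=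
              gameD_mono Finset.subset_union_left
            have h4 := gameD_le_gameS_succ (G.induce {m}ᶜ) T
            omega
          · have hmc : m ∈ ({v}ᶜ : Set V) := Set.mem_compl_singleton_iff.mpr hmv
            set mh : ↥({v}ᶜ : Set V) := ⟨m, hmc⟩ with hmhdef
            have hco : (mh : V) = m := rfl
            obtain ⟨u, hu, huS⟩ := Finset.not_subset.mp (mem_moves.mp hm)
            have huv : u ≠ v := fun hc => huS (by simp [hc])
            have huc : u ∈ ({v}ᶜ : Set V) := Set.mem_compl_singleton_iff.mpr huv
            have hmhleg : mh ∈ moves (G.induce {v}ᶜ) T := by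
              refine mem_moves.mpr (Finset.not_subset.mpr ⟨⟨u, huc⟩, ?_, ?_⟩)
              · exact mem_N_iff.mpr (by rw [hco]; exact hu)
              · intro hc
                exact huS (Finset.mem_union_left _ (mem_rho_iff.mpr hc))
            have h1 : gameS G (rho v T ∪ {v}) =
                1 + gameD G (rho v (T ∪ N (G.induce {v}ᶜ) mh) ∪ {v}) := by
              rw [hdef, ← set_id_C T mh, hco]
            have hmeas : (Finset.univ \ (rho v (T ∪ N (G.induce {v}ᶜ) mh) ∪ {v})).card ≤ k := by
              have := card_lt _ hm
              rw [show (rho v T ∪ {v}) ∪ N G m = rho v (T ∪ N (G.induce {v}ᶜ) mh) ∪ {v} by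
                rw [← set_id_C T mh, hco]] at this
              omega
            have h2 := ((ih (T ∪ N (G.induce {v}ᶜ) mh)).1 hmeas).1
            have h3 := le_gameS_of_mem hmhleg
            omega
        · rw [gameS_of_empty hre]; omega
    · intro hk
      constructor
      · -- (1D2)
        by_cases hre : (moves G (rho v T)).Nonempty
        · by_cases himag : (moves (G.induce {v}ᶜ) T).Nonempty
          · obtain ⟨d, hd, hdef⟩ := gameD_exists himag
            have hdreal : (d : V) ∈ moves G (rho v T) :=
              imag_legal_real hd Finset.subset_union_left
            have h1 := gameD_le_of_mem hdreal
            have hmeas0 := card_lt (d : V) hdreal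
            by_cases hvN : v ∈ N G (d : V)
            · rw [set_id_A T d hvN] at h1
              rw [set_id_A T d hvN] at hmeas0
              have h2 := ((ih (T ∪ N (G.induce {v}ᶜ) d)).1 (by omega)).2
              omega
            · rw [set_id_B T d hvN] at h1
              rw [set_id_B T d hvN] at hmeas0
              have h2 := ((ih (T ∪ N (G.induce {v}ᶜ) d)).2 (by omega)).2
              omega
          · -- imagined game over: only v left
            have hvleg : v ∈ moves G (rho v T) :=
              mem_moves.mpr (Finset.not_subset.mpr ⟨v, self_mem_N G v, not_v_mem_rho T⟩)
            have h1 := gameD_le_of_mem hvleg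
            have huniv : rho v T ∪ N G v = Finset.univ := by
              apply Finset.eq_univ_iff_forall.mpr
              intro u
              by_cases hu : u = v
              · exact Finset.mem_union_right _ (hu ▸ self_mem_N G v)
              · have huc : u ∈ ({v}ᶜ : Set V) := Set.mem_compl_singleton_iff.mpr hu
                have : (⟨u, huc⟩ : ↥({v}ᶜ : Set V)) ∈ T := by
                  by_contra hc
                  exact himag ⟨⟨u, huc⟩, mem_moves.mpr (Finset.not_subset.mpr
                    ⟨⟨u, huc⟩, self_mem_N _ _, hc⟩)⟩
                exact Finset.mem_union_left _ (mem_rho_iff.mpr this)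
            rw [huniv] at h1
            have h0 : gameS G Finset.univ = 0 :=
              gameS_of_empty (by rw [moves_nonempty_iff]; simp)
            omega
        · rw [gameD_of_empty hre]; omega
      · -- (1S2)
        by_cases hre : (moves G (rho v T)).Nonempty
        · obtain ⟨m, hm, hdef⟩ := gameS_exists hre
          by_cases hmv : m = v
          · subst hmv
            rw [set_id_v T] at hdef
            have hX' : ∀ u', G.Adj m u' → u' ∈ rho m (T ∪ Xhat G m) := by
              intro u' hu'
              exact (mem_rho_union_Xhat hu'.ne').mpr (Or.inr hu')
            have h2 := (R3 (Finset.univ \ (rho m (T ∪ Xhat G m) ∪ {m})).card _ le_rfl hX').1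
            have h3 : gameD (G.induce {m}ᶜ) (T ∪ Xhat G m) ≤ gameD (G.induce {m}ᶜ) T :=
              gameD_mono Finset.subset_union_left
            have h4 := gameD_le_gameS_succ (G.induce {m}ᶜ) T
            omega
          · have hmc : m ∈ ({v}ᶜ : Set V) := Set.mem_compl_singleton_iff.mpr hmv
            set mh : ↥({v}ᶜ : Set V) := ⟨m, hmc⟩ with hmhdef
            have hco : (mh : V) = m := rfl
            by_cases hleg : mh ∈ moves (G.induce {v}ᶜ) T
            · have hmeas0 := card_lt m hm
              by_cases hvN : v ∈ N G m
              · have hidA : rho v T ∪ N G m = rho v (T ∪ N (G.induce {v}ᶜ) mh) ∪ {v} := by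
                  rw [← set_id_A T mh (by rw [hco]; exact hvN), hco]
                rw [hidA] at hdef hmeas0
                have h2 := ((ih (T ∪ N (G.induce {v}ᶜ) mh)).1 (by omega)).1
                have h3 := le_gameS_of_mem hleg
                omega
              · have hidB : rho v T ∪ N G m = rho v (T ∪ N (G.induce {v}ᶜ) mh) := by
                  rw [← set_id_B T mh (by rw [hco]; exact hvN), hco]
                rw [hidB] at hdef hmeas0
                have h2 := ((ih (T ∪ N (G.induce {v}ᶜ) mh)).2 (by omega)).1
                have h3 := le_gameS_of_mem hleg
                omega
            · -- Staller's move dominates only v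
              have hsub : N (G.induce {v}ᶜ) mh ⊆ T := of_not_not
                (fun hc => hleg (mem_moves.mpr hc))
              obtain ⟨u, hu, huT⟩ := Finset.not_subset.mp (mem_moves.mp hm)
              have huv : u = v := by
                by_contra hc
                have huc : u ∈ ({v}ᶜ : Set V) := Set.mem_compl_singleton_iff.mpr hc
                have hmem : (⟨u, huc⟩ : ↥({v}ᶜ : Set V)) ∈ N (G.induce {v}ᶜ) mh :=
                  mem_N_iff.mpr (by rw [hco]; exact hu)
                exact huT (mem_rho_iff.mpr (hsub hmem))
              have hvN : v ∈ N G m := huv ▸ hu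
              have hid : rho v T ∪ N G m = rho v T ∪ {v} := by
                ext w
                simp only [Finset.mem_union, Finset.mem_singleton]
                constructor
                · rintro (h | h)
                  · exact Or.inl h
                  · by_cases hwv : w = v
                    · exact Or.inr hwv
                    · have hwc : w ∈ ({v}ᶜ : Set V) := Set.mem_compl_singleton_iff.mpr hwv
                      have hmem : (⟨w, hwc⟩ : ↥({v}ᶜ : Set V)) ∈ N (G.induce {v}ᶜ) mh :=
                        mem_N_iff.mpr (by rw [hco]; exact h)
                      exact Or.inl (mem_rho_iff.mpr (hsub hmem))
                · rintro (h | h)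
                  · exact Or.inl h
                  · subst h; exact Or.inr hvN
              rw [hid] at hdef
              have hM1 := M1 (G := G) (v := v) T
              omega
        · rw [gameS_of_empty hre]; omega

end Main


end DomGame

open DomGame in
/-- For any graph `G` and any vertex `v`, `γ_g'(G) − γ_g'(G−v) ≤ 2`. -/
theorem vertex_removal_gameS {V : Type*} [Fintype V] (G : SimpleGraph V) (v : V) :
    (gammaG' G : ℤ) - gammaG' (G.induce {v}ᶜ) ≤ 2 := by
  have h := (mainlem (G := G) (v := v)
    (Finset.univ \ (rho v (∅ : Finset ↥({v}ᶜ : Set V)))).card (∅ : Finset ↥({v}ᶜ : Set V))).2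
    le_rfl
  have hempty : rho v (∅ : Finset ↥({v}ᶜ : Set V)) = (∅ : Finset V) := Finset.image_empty _
  rw [hempty] at h
  have h2 := h.2
  unfold gammaG'
  omega
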